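/- Let f ∈ H^{3/2}(ℝ/ℤ) be a closed curve in ℝⁿ and let 0 ≤ θ₁ < θ₂ < … < θ_m < 1 satisfy the equilateral condition. Then for every i (indices mod m), ‖Δᵢf − Δᵢ₊₁f‖ ≤ 2(θᵢ₊₂ − θᵢ)·[f']_{H^{1/2}([θᵢ,θᵢ₊₂]×[θᵢ,θᵢ₊₂])}, where Δᵢf = f(θᵢ₊₁) − f(θᵢ). -/

import Mathlib

open MeasureTheory Real
open scoped RealInnerProductSpace ENNReal

noncomputable section

/-- The standard distance on `ℝ/ℤ`, expressed through real representatives. -/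
def circleDist (a b : ℝ) : ℝ := min (Int.fract (a - b)) (1 - Int.fract (a - b))

/-- The `H^{1/2}`-seminorm `[u]_{H^{1/2}(I×J)}`. -/
def seminormH {n : ℕ} (u : ℝ → EuclideanSpace ℝ (Fin n)) (I J : Set ℝ) : ℝ :=
  Real.sqrt (∫ a in I, ∫ b in J, ‖u a - u b‖ ^ 2 / circleDist a b ^ 2)

/-- `K(u, ε)`: supremum of the `H^{1/2}`-seminorms of `u` over pairs of
measurable subsets of `ℝ/ℤ` of measure at most `ε`. -/
def Kmod {n : ℕ} (u : ℝ → EuclideanSpace ℝ (Fin n)) (ε : ℝ) : ℝ :=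
  sSup { r : ℝ | ∃ I J : Set ℝ, MeasurableSet I ∧ MeasurableSet J ∧
    I ⊆ Set.Ico (0 : ℝ) 1 ∧ J ⊆ Set.Ico (0 : ℝ) 1 ∧
    volume I ≤ ENNReal.ofReal ε ∧ volume J ≤ ENNReal.ofReal ε ∧
    r = seminormH u I J }

/-- Difference operator `Δᵢ` in the first index. -/
def dOpI (u : ℤ → ℤ → ℝ) (i j : ℤ) : ℝ := u (i + 1) j - u i j

/-- Difference operator `Δⱼ` in the second index. -/
def dOpJ (u : ℤ → ℤ → ℝ) (i j : ℤ) : ℝ := u i (j + 1) - u i j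

/-- Arithmetic mean `Aᵢ` in the first index. -/
def aOpI (u : ℤ → ℤ → ℝ) (i j : ℤ) : ℝ := (u i j + u (i + 1) j) / 2

/-- Arithmetic mean `Aⱼ` in the second index. -/
def aOpJ (u : ℤ → ℤ → ℝ) (i j : ℤ) : ℝ := (u i j + u i (j + 1)) / 2

/-- Arithmetic mean `A_{ij}` over the four corners. -/
def aOpIJ (u : ℤ → ℤ → ℝ) (i j : ℤ) : ℝ :=
  (u i j + u (i + 1) j + u i (j + 1) + u (i + 1) (j + 1)) / 4

/-- The chord `Δᵢʲf = f(θⱼ) − f(θᵢ)`. -/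
def chord {n : ℕ} (f : ℝ → EuclideanSpace ℝ (Fin n)) (θ : ℤ → ℝ) (i j : ℤ) :
    EuclideanSpace ℝ (Fin n) := f (θ j) - f (θ i)

/-- The edge `Δᵢf = f(θᵢ₊₁) − f(θᵢ)`. -/
def edge {n : ℕ} (f : ℝ → EuclideanSpace ℝ (Fin n)) (θ : ℤ → ℝ) (i : ℤ) :
    EuclideanSpace ℝ (Fin n) := f (θ (i + 1)) - f (θ i)

/-- The unit edge vector `Δᵢf/‖Δᵢf‖`. -/
def uedge {n : ℕ} (f : ℝ → EuclideanSpace ℝ (Fin n)) (θ : ℤ → ℝ) (i : ℤ) :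
    EuclideanSpace ℝ (Fin n) := ‖edge f θ i‖⁻¹ • edge f θ i

/-- Chord length `‖Δᵢʲf‖` as a doubly indexed quantity. -/
def chn {n : ℕ} (f : ℝ → EuclideanSpace ℝ (Fin n)) (θ : ℤ → ℝ) (i j : ℤ) : ℝ :=
  ‖chord f θ i j‖




lemma circleDist_nonneg (a b : ℝ) : 0 ≤ circleDist a b := by
  have h1 := Int.fract_nonneg (a - b)
  have h2 := Int.fract_lt_one (a - b)
  unfold circleDist; rw [le_min_iff]; constructor <;> linarith

lemma circleDist_le_abs {a b : ℝ} (h : |a - b| < 1) : circleDist a b ≤ |a - b| := by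
  unfold circleDist
  rcases le_or_gt 0 (a - b) with hx | hx
  · rw [abs_of_nonneg hx]
    have : Int.fract (a - b) = a - b := Int.fract_eq_self.2 ⟨hx, by rw [abs_of_nonneg hx] at h; exact h⟩
    rw [this]; exact min_le_left _ _
  · rw [abs_of_neg hx]
    have hb : (-1 : ℝ) < a - b := by rw [abs_of_neg hx] at h; linarith
    have : Int.fract (a - b) = a - b + 1 := by
      rw [Int.fract_eq_iff]
      refine ⟨by linarith, by linarith, -1, by push_cast; ring⟩
    rw [this]
    calc min (a - b + 1) (1 - (a - b + 1)) ≤ 1 - (a - b + 1) := min_le_right _ _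
    _ = -(a-b) := by ring

lemma circleDist_pos {a b : ℝ} (h : |a - b| < 1) (hne : a ≠ b) : 0 < circleDist a b := by
  have h1 := Int.fract_nonneg (a - b)
  have h2 := Int.fract_lt_one (a - b)
  have h0 : Int.fract (a - b) ≠ 0 := by
    intro hz
    have hfl : a - b = (⌊a - b⌋ : ℝ) := by
      have := Int.self_sub_floor (a - b); rw [hz] at this; linarith
    rw [hfl] at h
    have habs : |⌊a - b⌋| < 1 := by exact_mod_cast (by rwa [← Int.cast_abs] at h : ((|⌊a-b⌋| : ℤ) : ℝ) < 1)
    have : ⌊a - b⌋ = 0 := by rcases abs_lt.mp habs with ⟨x,y⟩; omega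
    apply hne; rw [this] at hfl; push_cast at hfl; linarith
  unfold circleDist; rw [lt_min_iff]
  exact ⟨lt_of_le_of_ne h1 (Ne.symm h0), by linarith⟩

lemma circleDist_shift (a b : ℝ) (k l : ℤ) : circleDist (a + k) (b + l) = circleDist a b := by
  unfold circleDist
  have : a + k - (b + l) = a - b + (k - l : ℤ) := by push_cast; ring
  rw [this, Int.fract_add_intCast]



lemma norm_sub_smul_ge {E : Type*} [NormedAddCommGroup E] [InnerProductSpace ℝ E] {x y : E}
    (h : ‖x‖ = ‖y‖) {l m : ℝ} (hl : 0 ≤ l) (hm : 0 ≤ m) :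
    Real.sqrt (l * m) * ‖x - y‖ ≤ ‖l • x - m • y‖ := by
  have h1 : ‖x - y‖ ^ 2 = ‖x‖ ^ 2 - 2 * ⟪x, y⟫ + ‖y‖ ^ 2 := by
    rw [@norm_sub_sq_real]
    try ring
  have h2 : ‖l • x - m • y‖ ^ 2 = l^2 * ‖x‖^2 - 2 * (l * m) * ⟪x, y⟫ + m^2 * ‖y‖^2 := by
    rw [@norm_sub_sq_real, real_inner_smul_left, real_inner_smul_right, norm_smul, norm_smul]
    simp [mul_pow, abs_of_nonneg hl, abs_of_nonneg hm]; ring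
  have key : (Real.sqrt (l * m) * ‖x - y‖) ^ 2 ≤ ‖l • x - m • y‖ ^ 2 := by
    rw [mul_pow, Real.sq_sqrt (mul_nonneg hl hm), h1, h2, ← h]
    nlinarith [sq_nonneg (l - m), sq_nonneg ‖x‖]
  have := Real.sqrt_le_sqrt key
  rwa [Real.sqrt_sq (by positivity), Real.sqrt_sq (norm_nonneg _)] at this



lemma integrableOn_unitSq_shift {G : ℝ × ℝ → ℝ}
    (hper : ∀ (p : ℝ × ℝ) (k l : ℤ), G (p.1 + k, p.2 + l) = G p)
    (h : IntegrableOn G (Set.Ico (0:ℝ) 1 ×ˢ Set.Ico (0:ℝ) 1) volume)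
    (k l : ℤ) :
    IntegrableOn G (Set.Ico (k:ℝ) (k+1) ×ˢ Set.Ico (l:ℝ) (l+1)) volume := by
  have hmp : MeasurePreserving (fun p : ℝ × ℝ => p + ((k:ℝ), (l:ℝ))) volume volume :=
    measurePreserving_add_right volume _
  have hemb : MeasurableEmbedding (fun p : ℝ × ℝ => p + ((k:ℝ), (l:ℝ))) :=
    (Homeomorph.addRight ((k:ℝ), (l:ℝ))).measurableEmbedding
  have himg : (fun p : ℝ × ℝ => p + ((k:ℝ),(l:ℝ))) '' (Set.Ico (0:ℝ) 1 ×ˢ Set.Ico (0:ℝ) 1)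
      = Set.Ico (k:ℝ) (k+1) ×ˢ Set.Ico (l:ℝ) (l+1) := by
    ext ⟨x, y⟩
    simp only [Set.mem_image, Set.mem_prod, Set.mem_Ico, Prod.ext_iff, Prod.exists,
      Prod.mk_add_mk, Prod.fst, Prod.snd]
    constructor
    · rintro ⟨u, v, ⟨⟨h1, h2⟩, h3, h4⟩, hx, hy⟩
      refine ⟨⟨?_, ?_⟩, ?_, ?_⟩ <;> linarith
    · rintro ⟨⟨h1, h2⟩, h3, h4⟩
      exact ⟨x - k, y - l, ⟨⟨by linarith, by linarith⟩, by linarith, by linarith⟩, by ring, by ring⟩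
  rw [← himg, hmp.integrableOn_image hemb]
  have hGc : G ∘ (fun p : ℝ × ℝ => p + ((k:ℝ), (l:ℝ))) = G := by
    funext p
    have := hper p k l
    exact this
  rwa [hGc]

lemma integrableOn_sq_of_per {G : ℝ × ℝ → ℝ}
    (hper : ∀ (p : ℝ × ℝ) (k l : ℤ), G (p.1 + k, p.2 + l) = G p)
    (h : IntegrableOn G (Set.Ico (0:ℝ) 1 ×ˢ Set.Ico (0:ℝ) 1) volume)
    {a c : ℝ} (hc : c ≤ a + 1) :
    IntegrableOn G (Set.Icc a c ×ˢ Set.Icc a c) volume := by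
  set k : ℤ := ⌊a⌋ with hk
  have hsub : Set.Icc a c ⊆ Set.Ico (k:ℝ) (k+1) ∪ Set.Ico ((k:ℝ)+1) ((k:ℝ)+2) := by
    intro x hx
    have h1 : (k:ℝ) ≤ a := Int.floor_le a
    have h2 : a < (k:ℝ) + 1 := Int.lt_floor_add_one a
    rcases lt_or_ge x ((k:ℝ)+1) with hx1 | hx1
    · exact Or.inl ⟨le_trans h1 hx.1, hx1⟩
    · exact Or.inr ⟨hx1, by have := hx.2; linarith⟩
  have hIA : IntegrableOn G (Set.Ico (k:ℝ) (k+1) ×ˢ Set.Ico (k:ℝ) (k+1)) volume :=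
    integrableOn_unitSq_shift hper h k k
  have hIB : IntegrableOn G (Set.Ico (k:ℝ) (k+1) ×ˢ Set.Ico ((k:ℝ)+1) ((k:ℝ)+2)) volume := by
    have := integrableOn_unitSq_shift hper h k (k+1)
    convert this using 3 <;> push_cast <;> ring
  have hIC : IntegrableOn G (Set.Ico ((k:ℝ)+1) ((k:ℝ)+2) ×ˢ Set.Ico (k:ℝ) (k+1)) volume := by
    have := integrableOn_unitSq_shift hper h (k+1) k
    convert this using 3 <;> push_cast <;> ring
  have hID : IntegrableOn G (Set.Ico ((k:ℝ)+1) ((k:ℝ)+2) ×ˢ Set.Ico ((k:ℝ)+1) ((k:ℝ)+2)) volume := by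
    have := integrableOn_unitSq_shift hper h (k+1) (k+1)
    convert this using 3 <;> push_cast <;> ring
  have : IntegrableOn G
      ((Set.Ico (k:ℝ) (k+1) ∪ Set.Ico ((k:ℝ)+1) ((k:ℝ)+2)) ×ˢ
        (Set.Ico (k:ℝ) (k+1) ∪ Set.Ico ((k:ℝ)+1) ((k:ℝ)+2))) volume := by
    rw [Set.union_prod, Set.prod_union, Set.prod_union]
    exact ((hIA.union hIB).union (hIC.union hID)).mono_set (by intro z hz; tauto)
  exact this.mono_set (Set.prod_mono hsub hsub)

lemma measurable_circleDist : Measurable (fun z : ℝ × ℝ => circleDist z.1 z.2) := by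
  unfold circleDist
  exact Measurable.min (measurable_fract.comp (measurable_fst.sub measurable_snd))
    (measurable_const.sub (measurable_fract.comp (measurable_fst.sub measurable_snd)))

lemma key_estimate {n : ℕ} (fd : ℝ → EuclideanSpace ℝ (Fin n)) {a b c : ℝ}
    (hab : a < b) (hbc : b < c) (hca : c - a < 1)
    (hfd : IntegrableOn fd (Set.Icc a c) volume)
    (hsq : IntegrableOn (fun p : ℝ × ℝ => ‖fd p.1 - fd p.2‖ ^ 2 / circleDist p.1 p.2 ^ 2)
      (Set.Icc a c ×ˢ Set.Icc a c) volume)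
    {x y : EuclideanSpace ℝ (Fin n)}
    (hx : x = ∫ t in Set.Icc a b, fd t) (hy : y = ∫ t in Set.Icc b c, fd t)
    (hnorm : ‖x‖ = ‖y‖) :
    ‖x - y‖ ≤ (c - a) *
      Real.sqrt (∫ p in Set.Icc a c ×ˢ Set.Icc a c,
        ‖fd p.1 - fd p.2‖ ^ 2 / circleDist p.1 p.2 ^ 2) := by
  set I := Set.Icc a b with hI
  set J := Set.Icc b c with hJ
  set S := Set.Icc a c with hS
  set μI := volume.restrict I with hμI
  set μJ := volume.restrict J with hμJ
  haveI : IsFiniteMeasure μI := ⟨by rw [Measure.restrict_apply_univ]; exact measure_Icc_lt_top⟩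
  haveI : IsFiniteMeasure μJ := ⟨by rw [Measure.restrict_apply_univ]; exact measure_Icc_lt_top⟩
  have hIS : I ⊆ S := Set.Icc_subset_Icc le_rfl hbc.le
  have hJS : J ⊆ S := Set.Icc_subset_Icc hab.le le_rfl
  have hfdI : IntegrableOn fd I volume := hfd.mono_set hIS
  have hfdJ : IntegrableOn fd J volume := hfd.mono_set hJS
  -- integrability of the coordinates on the product
  have h2 : Integrable (fun z : ℝ × ℝ => fd z.2) (μI.prod μJ) := by
    have := (integrable_const (1:ℝ) (μ := μI)).smul_prod hfdJ
    simpa using this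
  have h1 : Integrable (fun z : ℝ × ℝ => fd z.1) (μI.prod μJ) := by
    have h1' : Integrable (fun z : ℝ × ℝ => fd z.2) (μJ.prod μI) := by
      have := (integrable_const (1:ℝ) (μ := μJ)).smul_prod hfdI
      simpa using this
    have := h1'.swap
    simpa [Function.comp_def] using this
  have hg : Integrable (fun z : ℝ × ℝ => fd z.1 - fd z.2) (μI.prod μJ) := h1.sub h2
  -- measure values
  have hμIuniv : (μI Set.univ).toReal = b - a := by
    rw [hμI, Measure.restrict_apply_univ, hI, Real.volume_Icc, ENNReal.toReal_ofReal (by linarith)]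
  have hμJuniv : (μJ Set.univ).toReal = c - b := by
    rw [hμJ, Measure.restrict_apply_univ, hJ, Real.volume_Icc, ENNReal.toReal_ofReal (by linarith)]
  -- the identity
  have e1 : ∫ z, fd z.1 ∂(μI.prod μJ) = (c - b) • ∫ t, fd t ∂μI := by
    rw [integral_prod _ h1]
    simp only [integral_const]
    rw [integral_smul, measureReal_def, hμJuniv]
  have e2 : ∫ z, fd z.2 ∂(μI.prod μJ) = (b - a) • ∫ t, fd t ∂μJ := by
    rw [integral_prod _ h2]
    simp only [integral_const, measureReal_def, hμIuniv]
  have hid : (c - b) • x - (b - a) • y = ∫ z, (fd z.1 - fd z.2) ∂(μI.prod μJ) := by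
    rw [integral_sub h1 h2, e1, e2, hx, hy]
  -- pointwise bound
  set F : ℝ × ℝ → ℝ := fun z => ‖fd z.1 - fd z.2‖ / circleDist z.1 z.2 with hF
  have hFnonneg : ∀ z, 0 ≤ F z := fun z =>
    div_nonneg (norm_nonneg _) (circleDist_nonneg _ _)
  have hpoint : ∀ z ∈ I ×ˢ J, ‖fd z.1 - fd z.2‖ ≤ (c - a) * F z := by
    rintro ⟨s, t⟩ ⟨hs, ht⟩
    simp only [hI, hJ, Set.mem_Icc] at hs ht
    have habs : |s - t| ≤ c - a := by
      rw [abs_le]; constructor <;> [linarith; linarith]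
    by_cases hst : s = t
    · subst hst; simp [hF]
    · have hd : 0 < circleDist s t := circleDist_pos (lt_of_le_of_lt habs hca) hst
      have hdle : circleDist s t ≤ c - a := le_trans (circleDist_le_abs (lt_of_le_of_lt habs hca)) habs
      have : ‖fd (s, t).1 - fd (s, t).2‖ = circleDist s t * F (s, t) := by
        rw [hF]; field_simp
      rw [this]
      exact mul_le_mul_of_nonneg_right hdle (hFnonneg _)
  -- integrability of F and F^2 on I ×ˢ J
  have hprodres : μI.prod μJ = (volume : Measure (ℝ × ℝ)).restrict (I ×ˢ J) := by
    rw [hμI, hμJ, Measure.prod_restrict, ← Measure.volume_eq_prod]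
  have hsqIJ : Integrable (fun z : ℝ × ℝ => ‖fd z.1 - fd z.2‖ ^ 2 / circleDist z.1 z.2 ^ 2)
      (μI.prod μJ) := by
    rw [hprodres]
    exact hsq.mono_set (Set.prod_mono hIS hJS)
  have hFsq : ∀ z, F z ^ 2 = ‖fd z.1 - fd z.2‖ ^ 2 / circleDist z.1 z.2 ^ 2 := by
    intro z; rw [hF, div_pow]
  have hFmeas : AEStronglyMeasurable F (μI.prod μJ) := by
    have hn : AEStronglyMeasurable (fun z : ℝ × ℝ => ‖fd z.1 - fd z.2‖) (μI.prod μJ) :=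
      hg.aestronglyMeasurable.norm
    have hc : Measurable (fun z : ℝ × ℝ => (circleDist z.1 z.2)⁻¹) := measurable_circleDist.inv
    exact (hn.aemeasurable.mul hc.aemeasurable).aestronglyMeasurable.congr
      (Filter.Eventually.of_forall (fun z => by simp only [hF, div_eq_mul_inv, Pi.mul_apply]))
  have hFint : Integrable F (μI.prod μJ) := by
    refine Integrable.mono' ((hsqIJ.add (integrable_const 1)).div_const 2) hFmeas
      (Filter.Eventually.of_forall fun z => ?_)
    rw [Real.norm_of_nonneg (hFnonneg z)]
    have h := hFsq z
    simp only [Pi.add_apply]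
    rw [← h]
    nlinarith [sq_nonneg (F z - 1), hFnonneg z]
  -- step: norm of integral
  have step1 : Real.sqrt ((c - b) * (b - a)) * ‖x - y‖ ≤ ‖(c - b) • x - (b - a) • y‖ :=
    norm_sub_smul_ge hnorm (by linarith) (by linarith)
  have step2 : ‖(c - b) • x - (b - a) • y‖ ≤ ∫ z, ‖fd z.1 - fd z.2‖ ∂(μI.prod μJ) := by
    rw [hid]; exact norm_integral_le_integral_norm _
  have step3 : ∫ z, ‖fd z.1 - fd z.2‖ ∂(μI.prod μJ) ≤ (c - a) * ∫ z, F z ∂(μI.prod μJ) := by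
    rw [← integral_const_mul]
    refine integral_mono_ae hg.norm (hFint.const_mul _) ?_
    rw [hprodres]
    filter_upwards [ae_restrict_mem ((measurableSet_Icc.prod measurableSet_Icc))] with z hz
    exact hpoint z hz
  -- Cauchy-Schwarz
  have hpq : (2:ℝ).HolderConjugate 2 := ⟨by norm_num, by norm_num, by norm_num⟩
  have hmem : MemLp F (ENNReal.ofReal 2) (μI.prod μJ) := by
    rw [show ENNReal.ofReal 2 = 2 by norm_num]
    rw [memLp_two_iff_integrable_sq hFmeas]
    exact hsqIJ.congr (Filter.Eventually.of_forall fun z => (hFsq z).symm)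
  have hone : MemLp (fun _ : ℝ × ℝ => (1:ℝ)) (ENNReal.ofReal 2) (μI.prod μJ) := memLp_const 1
  have hCS : ∫ z, F z ∂(μI.prod μJ) ≤
      (∫ z, F z ^ (2:ℝ) ∂(μI.prod μJ)) ^ (1/(2:ℝ)) *
        (∫ _ : ℝ × ℝ, (1:ℝ) ^ (2:ℝ) ∂(μI.prod μJ)) ^ (1/(2:ℝ)) := by
    have := integral_mul_le_Lp_mul_Lq_of_nonneg hpq
      (Filter.Eventually.of_forall hFnonneg)
      (Filter.Eventually.of_forall (fun _ => zero_le_one)) hmem hone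
    simpa using this
  have hrpow2 : ∀ z, F z ^ (2:ℝ) = F z ^ 2 := fun z => by
    rw [show (2:ℝ) = ((2:ℕ):ℝ) by norm_num, Real.rpow_natCast]
  have hμprod : (∫ _ : ℝ × ℝ, (1:ℝ) ^ (2:ℝ) ∂(μI.prod μJ)) = (b - a) * (c - b) := by
    simp only [Real.one_rpow, integral_const, smul_eq_mul, mul_one]
    rw [measureReal_def, ← Set.univ_prod_univ, Measure.prod_prod, ENNReal.toReal_mul, hμIuniv, hμJuniv]
  -- comparison of squares integrals
  set A := ∫ z, F z ^ 2 ∂(μI.prod μJ) with hA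
  set B := ∫ p in Set.Icc a c ×ˢ Set.Icc a c,
      ‖fd p.1 - fd p.2‖ ^ 2 / circleDist p.1 p.2 ^ 2 with hB
  have hAnonneg : 0 ≤ A := integral_nonneg fun z => sq_nonneg _
  have hBnonneg : 0 ≤ B := by
    refine setIntegral_nonneg (measurableSet_Icc.prod measurableSet_Icc) fun p _ => ?_
    positivity
  have hAB : A ≤ B := by
    rw [hA, hB]
    have : ∫ z, F z ^ 2 ∂(μI.prod μJ) =
        ∫ z in I ×ˢ J, ‖fd z.1 - fd z.2‖ ^ 2 / circleDist z.1 z.2 ^ 2 := by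
      rw [hprodres]; exact integral_congr_ae (Filter.Eventually.of_forall fun z => hFsq z)
    rw [this]
    refine setIntegral_mono_set hsq (Filter.Eventually.of_forall fun p => by positivity) ?_
    exact (Set.prod_mono hIS hJS).eventuallyLE
  have hCS' : ∫ z, F z ∂(μI.prod μJ) ≤ Real.sqrt ((b - a) * (c - b)) * Real.sqrt B := by
    have e3 : ∫ z, F z ^ (2:ℝ) ∂(μI.prod μJ) = A :=
      integral_congr_ae (Filter.Eventually.of_forall fun z => hrpow2 z)
    calc ∫ z, F z ∂(μI.prod μJ)
        ≤ (∫ z, F z ^ (2:ℝ) ∂(μI.prod μJ)) ^ (1/(2:ℝ)) *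
          (∫ _ : ℝ × ℝ, (1:ℝ) ^ (2:ℝ) ∂(μI.prod μJ)) ^ (1/(2:ℝ)) := hCS
      _ = A ^ (1/(2:ℝ)) * ((b - a) * (c - b)) ^ (1/(2:ℝ)) := by rw [e3, hμprod]
      _ = Real.sqrt A * Real.sqrt ((b - a) * (c - b)) := by
          rw [Real.sqrt_eq_rpow, Real.sqrt_eq_rpow]
      _ ≤ Real.sqrt B * Real.sqrt ((b - a) * (c - b)) := by
          exact mul_le_mul_of_nonneg_right (Real.sqrt_le_sqrt hAB) (Real.sqrt_nonneg _)
      _ = Real.sqrt ((b - a) * (c - b)) * Real.sqrt B := mul_comm _ _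
  -- combine everything
  have hs0 : 0 < Real.sqrt ((b - a) * (c - b)) :=
    Real.sqrt_pos.2 (mul_pos (by linarith) (by linarith))
  have hchain : Real.sqrt ((b - a) * (c - b)) * ‖x - y‖ ≤
      Real.sqrt ((b - a) * (c - b)) * ((c - a) * Real.sqrt B) := by
    have hcomm : Real.sqrt ((c - b) * (b - a)) = Real.sqrt ((b - a) * (c - b)) := by
      rw [mul_comm]
    calc Real.sqrt ((b - a) * (c - b)) * ‖x - y‖
        = Real.sqrt ((c - b) * (b - a)) * ‖x - y‖ := by rw [hcomm]
      _ ≤ ‖(c - b) • x - (b - a) • y‖ := step1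
      _ ≤ ∫ z, ‖fd z.1 - fd z.2‖ ∂(μI.prod μJ) := step2
      _ ≤ (c - a) * ∫ z, F z ∂(μI.prod μJ) := step3
      _ ≤ (c - a) * (Real.sqrt ((b - a) * (c - b)) * Real.sqrt B) := by
          exact mul_le_mul_of_nonneg_left hCS' (by linarith)
      _ = Real.sqrt ((b - a) * (c - b)) * ((c - a) * Real.sqrt B) := by ring
  exact le_of_mul_le_mul_left hchain hs0


/-- Under the equilateral condition, consecutive edges of the inscribed polygon
differ by at most `2(θᵢ₊₂ − θᵢ)·[f']_{H^{1/2}([θᵢ,θᵢ₊₂]²)}`. -/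
theorem consecutive_edge_estimate (n : ℕ)
    (f fd : ℝ → EuclideanSpace ℝ (Fin n))
    (hf_per : ∀ x : ℝ, f (x + 1) = f x)
    (hfd_per : ∀ x : ℝ, fd (x + 1) = fd x)
    (hfd_loc : LocallyIntegrable fd volume)
    (hFTC : ∀ a b : ℝ, f b - f a = ∫ t in a..b, fd t)
    (hH12 : IntegrableOn
      (fun p : ℝ × ℝ => ‖fd p.1 - fd p.2‖ ^ 2 / circleDist p.1 p.2 ^ 2)
      (Set.Ico (0 : ℝ) 1 ×ˢ Set.Ico (0 : ℝ) 1) volume)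
    (m : ℕ) (hm : 3 ≤ m) (θ : ℤ → ℝ)
    (hmono : StrictMono θ)
    (hθper : ∀ i : ℤ, θ (i + m) = θ i + 1)
    (hθ0 : 0 ≤ θ 1) (hθ1 : θ (m : ℤ) < 1)
    (Lm : ℝ)
    (hLm : Lm = ∑ i ∈ Finset.Icc (1 : ℤ) (m : ℤ), ‖edge f θ i‖)
    (heq : ∀ i : ℤ, ‖edge f θ i‖ = Lm / m)
 :
    ∀ i : ℤ, ‖edge f θ i - edge f θ (i + 1)‖ ≤
      2 * (θ (i + 2) - θ i) *
        seminormH fd (Set.Icc (θ i) (θ (i + 2))) (Set.Icc (θ i) (θ (i + 2))) := by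
  intro i
  set a := θ i with ha
  set b := θ (i + 1) with hb
  set c := θ (i + 2) with hc
  have hab : a < b := hmono (by omega)
  have hbc : b < c := hmono (by omega)
  have hm3 : (3 : ℤ) ≤ (m : ℤ) := by exact_mod_cast hm
  have hca : c - a < 1 := by
    have h1 : θ (i + 2) < θ (i + (m : ℤ)) := hmono (by omega)
    have h2 : θ (i + (m : ℤ)) = θ i + 1 := hθper i
    rw [← ha, ← hc] at *
    linarith
  have hfdS : IntegrableOn fd (Set.Icc a c) volume :=
    hfd_loc.integrableOn_isCompact isCompact_Icc
  -- periodicity of fd under integer shifts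
  have hfd_int : ∀ (x : ℝ) (k : ℤ), fd (x + k) = fd x := by
    intro x k
    have hper : Function.Periodic fd 1 := hfd_per
    have := hper.sub_zsmul_eq (x := x + k) k
    simpa [zsmul_eq_mul] using this.symm
  have hperG : ∀ (p : ℝ × ℝ) (k l : ℤ),
      (fun p : ℝ × ℝ => ‖fd p.1 - fd p.2‖ ^ 2 / circleDist p.1 p.2 ^ 2) (p.1 + k, p.2 + l) =
      (fun p : ℝ × ℝ => ‖fd p.1 - fd p.2‖ ^ 2 / circleDist p.1 p.2 ^ 2) p := by
    intro p k l
    simp only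
    rw [hfd_int p.1 k, hfd_int p.2 l, circleDist_shift]
  have hsqS : IntegrableOn
      (fun p : ℝ × ℝ => ‖fd p.1 - fd p.2‖ ^ 2 / circleDist p.1 p.2 ^ 2)
      (Set.Icc a c ×ˢ Set.Icc a c) volume :=
    integrableOn_sq_of_per hperG hH12 (by linarith)
  -- identification of the edges with integrals
  have hx : edge f θ i = ∫ t in Set.Icc a b, fd t := by
    rw [edge, ← hb, ← ha, hFTC a b, intervalIntegral.integral_of_le hab.le,
      MeasureTheory.integral_Icc_eq_integral_Ioc]
  have hy : edge f θ (i + 1) = ∫ t in Set.Icc b c, fd t := by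
    rw [edge, show i + 1 + 1 = i + 2 by ring, ← hc, ← hb, hFTC b c,
      intervalIntegral.integral_of_le hbc.le, MeasureTheory.integral_Icc_eq_integral_Ioc]
  have hnorm : ‖edge f θ i‖ = ‖edge f θ (i + 1)‖ := by rw [heq i, heq (i + 1)]
  have hxnorm : ‖(∫ t in Set.Icc a b, fd t : EuclideanSpace ℝ (Fin n))‖ =
      ‖(∫ t in Set.Icc b c, fd t : EuclideanSpace ℝ (Fin n))‖ := by
    rw [← hx, ← hy]; exact hnorm
  have hkey := key_estimate fd hab hbc hca hfdS hsqS rfl rfl hxnorm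
  rw [← hx, ← hy] at hkey
  -- rewrite the product integral as an iterated integral
  have hsqS' : IntegrableOn
      (fun p : ℝ × ℝ => ‖fd p.1 - fd p.2‖ ^ 2 / circleDist p.1 p.2 ^ 2)
      (Set.Icc a c ×ˢ Set.Icc a c) ((volume : Measure ℝ).prod volume) := by
    rwa [← Measure.volume_eq_prod]
  have hiter : (∫ p in Set.Icc a c ×ˢ Set.Icc a c,
        ‖fd p.1 - fd p.2‖ ^ 2 / circleDist p.1 p.2 ^ 2) =
      ∫ s in Set.Icc a c, ∫ t in Set.Icc a c, ‖fd s - fd t‖ ^ 2 / circleDist s t ^ 2 := by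
    rw [Measure.volume_eq_prod]
    exact setIntegral_prod _ hsqS'
  have hsem : seminormH fd (Set.Icc a c) (Set.Icc a c) =
      Real.sqrt (∫ p in Set.Icc a c ×ˢ Set.Icc a c,
        ‖fd p.1 - fd p.2‖ ^ 2 / circleDist p.1 p.2 ^ 2) := by
    rw [seminormH, hiter]
  have hsemnn : 0 ≤ seminormH fd (Set.Icc a c) (Set.Icc a c) := by
    rw [seminormH]; exact Real.sqrt_nonneg _
  rw [← hsem] at hkey
  have hca0 : 0 ≤ c - a := by linarith
  calc ‖edge f θ i - edge f θ (i + 1)‖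
      ≤ (c - a) * seminormH fd (Set.Icc a c) (Set.Icc a c) := hkey
    _ ≤ 2 * (c - a) * seminormH fd (Set.Icc a c) (Set.Icc a c) := by nlinarith

end
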